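/- For every k > 0 and every y ≥ 0, the hybrid Poisson reparameterized data-fit χ_{k,y} is convex on ℝ. -/

import Mathlib

open Real Set

private lemma hybrid_hasDerivAt (k : ℝ) (hk : 0 < k) (y : ℝ) (x : ℝ) :
    HasDerivAt (fun θ : ℝ =>
      if θ ≤ 1 / k then
        (1 / k) * Real.exp (k * θ - 1) - y * (k * θ - Real.log k - 1)
      else θ - y * Real.log θ)
      (if x ≤ 1 / k then Real.exp (k * x - 1) - y * k else 1 - y / x) x := by
  have hL : ∀ t : ℝ, HasDerivAt
      (fun θ : ℝ => (1 / k) * Real.exp (k * θ - 1) - y * (k * θ - Real.log k - 1))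
      (Real.exp (k * t - 1) - y * k) t := by
    intro t
    have h1 : HasDerivAt (fun θ : ℝ => k * θ - 1) k t := by
      simpa using ((hasDerivAt_id t).const_mul k).sub_const 1
    have h2 := (h1.exp.const_mul (1 / k))
    have h3 : HasDerivAt (fun θ : ℝ => y * (k * θ - Real.log k - 1)) (y * k) t := by
      simpa using (((hasDerivAt_id t).const_mul k).sub_const (Real.log k)
          |>.sub_const 1).const_mul y
    have := h2.sub h3
    refine this.congr_deriv ?_
    field_simp
  have hR : ∀ t : ℝ, t ≠ 0 → HasDerivAt (fun θ : ℝ => θ - y * Real.log θ)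
      (1 - y / t) t := by
    intro t ht
    have := ((Real.hasDerivAt_log ht).const_mul y)
    have h := (hasDerivAt_id t).sub this
    exact h.congr_deriv (by rw [div_eq_mul_inv])
  rcases lt_trichotomy x (1 / k) with hx | hx | hx
  · rw [if_pos hx.le]
    have heq : (fun θ : ℝ =>
        if θ ≤ 1 / k then
          (1 / k) * Real.exp (k * θ - 1) - y * (k * θ - Real.log k - 1)
        else θ - y * Real.log θ) =ᶠ[nhds x]
        (fun θ : ℝ => (1 / k) * Real.exp (k * θ - 1) - y * (k * θ - Real.log k - 1)) := by
      filter_upwards [Iio_mem_nhds hx] with t ht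
      rw [if_pos (le_of_lt ht)]
    exact (hL x).congr_of_eventuallyEq heq
  · subst hx
    rw [if_pos le_rfl]
    have hkk : k * (1 / k) - 1 = 0 := by field_simp; norm_num
    -- glue one-sided derivatives
    have hLW : HasDerivWithinAt (fun θ : ℝ =>
        if θ ≤ 1 / k then
          (1 / k) * Real.exp (k * θ - 1) - y * (k * θ - Real.log k - 1)
        else θ - y * Real.log θ)
        (Real.exp (k * (1 / k) - 1) - y * k) (Iic (1 / k)) (1 / k) := by
      refine ((hL (1 / k)).hasDerivWithinAt).congr ?_ ?_
      · intro t ht; simp only [Set.mem_Iic] at ht; rw [if_pos ht]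
      · rw [if_pos le_rfl]
    have hRW : HasDerivWithinAt (fun θ : ℝ =>
        if θ ≤ 1 / k then
          (1 / k) * Real.exp (k * θ - 1) - y * (k * θ - Real.log k - 1)
        else θ - y * Real.log θ)
        (Real.exp (k * (1 / k) - 1) - y * k) (Ici (1 / k)) (1 / k) := by
      have hne : (1 : ℝ) / k ≠ 0 := by positivity
      have h := (hR (1 / k) hne).hasDerivWithinAt (s := Ici (1 / k))
      have hval : (1 : ℝ) - y / (1 / k) = Real.exp (k * (1 / k) - 1) - y * k := by
        rw [hkk, Real.exp_zero]
        field_simp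
      rw [hval] at h
      refine h.congr ?_ ?_
      · intro t ht
        simp only [Set.mem_Ici] at ht
        rcases eq_or_lt_of_le ht with h' | h'
        · rw [if_pos h'.symm.le, ← h']
          rw [hkk, Real.exp_zero]
          have : Real.log (1 / k) = -Real.log k := by
            rw [one_div, Real.log_inv]
          rw [this]
          field_simp
          ring
        · rw [if_neg (not_le.mpr h')]
      · rw [if_pos le_rfl, hkk, Real.exp_zero]
        have : Real.log (1 / k) = -Real.log k := by
          rw [one_div, Real.log_inv]
        rw [this]
        field_simp
        ring
    have := hLW.union hRW
    rw [Iic_union_Ici] at this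
    rw [← hasDerivWithinAt_univ]
    exact this
  · rw [if_neg (not_le.mpr hx)]
    have hx0 : x ≠ 0 := (lt_trans (by positivity) hx).ne'
    have heq : (fun θ : ℝ =>
        if θ ≤ 1 / k then
          (1 / k) * Real.exp (k * θ - 1) - y * (k * θ - Real.log k - 1)
        else θ - y * Real.log θ) =ᶠ[nhds x]
        (fun θ : ℝ => θ - y * Real.log θ) := by
      filter_upwards [Ioi_mem_nhds hx] with t ht
      rw [if_neg (not_le.mpr ht)]
    exact (hR x hx0).congr_of_eventuallyEq heq

/-- **Hybrid Poisson reparameterized data-fit is convex.**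
For every k > 0 and every y ≥ 0, the hybrid Poisson reparameterized data-fit
χ_{k,y} is convex on ℝ. -/
theorem poisson_hybrid_datafit_convex
    (k : ℝ) (hk : 0 < k) (y : ℝ) (hy : 0 ≤ y) :
    ConvexOn ℝ Set.univ (fun θ : ℝ =>
      if θ ≤ 1 / k then
        (1 / k) * Real.exp (k * θ - 1) - y * (k * θ - Real.log k - 1)
      else θ - y * Real.log θ) := by
  set f : ℝ → ℝ := fun θ : ℝ =>
      if θ ≤ 1 / k then
        (1 / k) * Real.exp (k * θ - 1) - y * (k * θ - Real.log k - 1)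
      else θ - y * Real.log θ with hf
  set g : ℝ → ℝ := fun x => if x ≤ 1 / k then Real.exp (k * x - 1) - y * k else 1 - y / x
    with hg
  have hd : ∀ x, HasDerivAt f (g x) x := fun x => hybrid_hasDerivAt k hk y x
  have hderiv : deriv f = g := funext fun x => (hd x).deriv
  have hmono : Monotone g := by
    intro a b hab
    have gval : ∀ t, t ≤ 1 / k → g t = Real.exp (k * t - 1) - y * k := fun t ht => if_pos ht
    have key : ∀ t, t ≤ 1 / k → g t ≤ 1 - y * k := by
      intro t ht
      rw [gval t ht]
      have : k * t - 1 ≤ 0 := by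
        have := (mul_le_mul_of_nonneg_left ht hk.le)
        rw [mul_one_div, div_self hk.ne'] at this
        linarith
      have := Real.exp_le_one_iff.mpr this
      linarith
    have key2 : ∀ t, 1 / k < t → 1 - y * k ≤ g t := by
      intro t ht
      rw [hg]
      simp only [if_neg (not_le.mpr ht)]
      have ht0 : 0 < t := lt_trans (by positivity) ht
      have : y / t ≤ y * k := by
        rw [div_le_iff₀ ht0]
        have h1 : 1 ≤ k * t := by
          have h2 : k * (1 / k) < k * t := mul_lt_mul_of_pos_left ht hk
          rw [mul_one_div, div_self hk.ne'] at h2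
          linarith
        nlinarith
      linarith
    by_cases hb : b ≤ 1 / k
    · have ha : a ≤ 1 / k := le_trans hab hb
      rw [gval a ha, gval b hb]
      have : Real.exp (k * a - 1) ≤ Real.exp (k * b - 1) := by
        apply Real.exp_le_exp.mpr
        nlinarith
      linarith
    · push_neg at hb
      by_cases ha : a ≤ 1 / k
      · exact le_trans (key a ha) (key2 b hb)
      · push_neg at ha
        rw [hg]
        simp only [if_neg (not_le.mpr ha), if_neg (not_le.mpr hb)]
        have ha0 : 0 < a := lt_trans (by positivity) ha
        have hb0 : 0 < b := lt_of_lt_of_le ha0 hab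
        have : y / b ≤ y / a := div_le_div_of_nonneg_left hy ha0 hab |>.trans_eq rfl
        linarith
  have hdiff : Differentiable ℝ f := fun x => (hd x).differentiableAt
  have := Monotone.convexOn_univ_of_deriv hdiff (hderiv ▸ hmono)
  exact this
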